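/- For any number n ≥ 1 of agents with additive valuations over a finite set M of indivisible items, there exists a complete allocation of M that is simultaneously 1/2-EFX and EF1. -/

import Mathlib

open Finset Function

lemma exists_good_perm {κ : Type*} [Fintype κ] [DecidableEq κ] [Nonempty κ]
    (u : κ → κ → ℝ) :
    ∃ σ : κ → κ, Function.Bijective σ ∧ (∀ k, u k k ≤ u k (σ k)) ∧
      ∃ i0, ∀ k, u k (σ i0) ≤ u k (σ k) := by
  classical
  obtain ⟨σ, hσ, hmax⟩ :=
    Finset.exists_max_image
      (Finset.univ.filter fun σ : κ → κ => Function.Bijective σ ∧ ∀ k, u k k ≤ u k (σ k))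
      (fun σ => ∑ k, u k (σ k))
      ⟨id, by simp [Function.bijective_id]⟩
  simp only [Finset.mem_filter, Finset.mem_univ, true_and] at hσ
  obtain ⟨hbij, himp⟩ := hσ
  refine ⟨σ, hbij, himp, ?_⟩
  by_contra hno
  push_neg at hno
  choose f hf using hno
  -- hf : ∀ i0, u (f i0) (σ (f i0)) < u (f i0) (σ i0)
  obtain ⟨y, p, hppos, hfp⟩ : ∃ y p, 0 < p ∧ f^[p] y = y := by
    obtain ⟨x⟩ := ‹Nonempty κ›
    have hninj : ¬ Function.Injective (fun t : Fin (Fintype.card κ + 1) => f^[(t : ℕ)] x) := by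
      intro h
      simpa using Fintype.card_le_of_injective _ h
    rw [Function.not_injective_iff] at hninj
    obtain ⟨a, b, hab, hne⟩ := hninj
    rcases lt_or_gt_of_ne hne with h | h
    · refine ⟨f^[(a : ℕ)] x, (b : ℕ) - a, by omega, ?_⟩
      rw [← Function.iterate_add_apply, show (b : ℕ) - a + a = b by omega]
      exact hab.symm
    · refine ⟨f^[(b : ℕ)] x, (a : ℕ) - b, by omega, ?_⟩
      rw [← Function.iterate_add_apply, show (a : ℕ) - b + b = a by omega]
      exact hab
  have hex : ∃ q, 0 < q ∧ f^[q] y = y := ⟨p, hppos, hfp⟩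
  set p0 := Nat.find hex with hp0def
  obtain ⟨hp0pos, hfy⟩ : 0 < p0 ∧ f^[p0] y = y := Nat.find_spec hex
  have iter_eq : ∀ a b : ℕ, a = b → f^[a] y = f^[b] y := fun a b h => by rw [h]
  have succ_eq : ∀ a : ℕ, f (f^[a] y) = f^[a + 1] y :=
    fun a => (Function.iterate_succ_apply' f a y).symm
  have hdist : ∀ i j, i ≤ j → j < p0 → f^[i] y = f^[j] y → i = j := by
    intro i j hij hj heq
    by_contra hne
    have hij' : i < j := lt_of_le_of_ne hij hne
    have hper : f^[p0 - j + i] y = y := by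
      rw [Function.iterate_add_apply, heq, ← Function.iterate_add_apply,
        show p0 - j + j = p0 by omega, hfy]
    exact Nat.find_min hex (by omega : p0 - j + i < p0) ⟨by omega, hper⟩
  set L : Finset κ := (Finset.range p0).image fun j => f^[j] y with hLdef
  have memL : ∀ z, z ∈ L ↔ ∃ j, j < p0 ∧ f^[j] y = z := by
    intro z; simp [hLdef]
  have hyL : y ∈ L := (memL y).mpr ⟨0, hp0pos, rfl⟩
  have hmod : ∀ j, j < p0 → f^[(j + 1) % p0] y = f^[j + 1] y := by
    intro j hj
    rcases eq_or_lt_of_le (Nat.succ_le_of_lt hj) with h | h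
    · have h1 : j + 1 = p0 := h
      rw [h1, Nat.mod_self, hfy]
      simp
    · rw [Nat.mod_eq_of_lt h]
  have hstep : ∀ j, j < p0 → f (f^[j] y) = f^[(j + 1) % p0] y := by
    intro j hj
    rw [hmod j hj]
    exact succ_eq j
  have hfL : ∀ z ∈ L, f z ∈ L := by
    intro z hz
    obtain ⟨j, hj, rfl⟩ := (memL z).mp hz
    exact (memL _).mpr ⟨(j + 1) % p0, Nat.mod_lt _ hp0pos, (hstep j hj).symm⟩
  have hinjL : ∀ z1 ∈ L, ∀ z2 ∈ L, f z1 = f z2 → z1 = z2 := by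
    intro z1 hz1 z2 hz2 heq
    obtain ⟨i, hi, rfl⟩ := (memL z1).mp hz1
    obtain ⟨j, hj, rfl⟩ := (memL z2).mp hz2
    have h1 : f^[(i + 1) % p0] y = f^[(j + 1) % p0] y := by
      rw [← hstep i hi, ← hstep j hj, heq]
    have h2 : (i + 1) % p0 = (j + 1) % p0 := by
      rcases le_total ((i + 1) % p0) ((j + 1) % p0) with h | h
      · exact hdist _ _ h (Nat.mod_lt _ hp0pos) h1
      · exact (hdist _ _ h (Nat.mod_lt _ hp0pos) h1.symm).symm
    have hi1 : (i + 1) % p0 = if i + 1 = p0 then 0 else i + 1 := by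
      split
      · next h => rw [h, Nat.mod_self]
      · next h => exact Nat.mod_eq_of_lt (by omega)
    have hj1 : (j + 1) % p0 = if j + 1 = p0 then 0 else j + 1 := by
      split
      · next h => rw [h, Nat.mod_self]
      · next h => exact Nat.mod_eq_of_lt (by omega)
    rw [hi1, hj1] at h2
    have : i = j := by split_ifs at h2 <;> omega
    rw [this]
  have hback : ∀ z ∈ L, ∃ z' ∈ L, f z' = z := by
    intro z hz
    obtain ⟨j, hj, rfl⟩ := (memL z).mp hz
    rcases Nat.eq_zero_or_pos j with rfl | hjpos
    · refine ⟨f^[p0 - 1] y, (memL _).mpr ⟨p0 - 1, by omega, rfl⟩, ?_⟩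
      calc f (f^[p0 - 1] y) = f^[p0 - 1 + 1] y := succ_eq _
        _ = f^[p0] y := iter_eq _ _ (by omega)
        _ = f^[0] y := by rw [hfy]; simp
    · refine ⟨f^[j - 1] y, (memL _).mpr ⟨j - 1, by omega, rfl⟩, ?_⟩
      calc f (f^[j - 1] y) = f^[j - 1 + 1] y := succ_eq _
        _ = f^[j] y := iter_eq _ _ (by omega)
  set τ : κ → κ := fun z => if z ∈ L then f z else z with hτdef
  have hτinj : Function.Injective τ := by
    intro a b hab
    by_cases ha : a ∈ L <;> by_cases hb : b ∈ L <;>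
      simp only [hτdef, ha, hb, if_true, if_false] at hab
    · exact hinjL a ha b hb hab
    · exact absurd (hab ▸ hfL a ha) hb
    · exact absurd (hab.symm ▸ hfL b hb) ha
    · exact hab
  have hτbij : Function.Bijective τ := (Finite.injective_iff_bijective).mp hτinj
  set e : κ ≃ κ := Equiv.ofBijective τ hτbij with hedef
  have he_apply : ∀ z, e z = τ z := fun z => rfl
  have hsymm_not : ∀ k ∉ L, e.symm k = k := by
    intro k hk
    rw [Equiv.symm_apply_eq, he_apply]
    simp [hτdef, hk]
  have hsymm_f : ∀ z ∈ L, e.symm (f z) = z := by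
    intro z hz
    rw [Equiv.symm_apply_eq, he_apply]
    simp [hτdef, hz]
  set σ' : κ → κ := σ ∘ e.symm with hσ'def
  have himp' : ∀ k, u k (σ k) ≤ u k (σ' k) ∧ (k ∈ L → u k (σ k) < u k (σ' k)) := by
    intro k
    by_cases hk : k ∈ L
    · obtain ⟨z, hz, hfz⟩ := hback k hk
      have hσ'k : σ' k = σ z := by
        rw [hσ'def]; simp only [Function.comp_apply, ← hfz, hsymm_f z hz]
      have hlt := hf z
      rw [hfz] at hlt
      rw [hσ'k]
      exact ⟨le_of_lt hlt, fun _ => hlt⟩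
    · have h0 : σ' k = σ k := by rw [hσ'def]; simp [hsymm_not k hk]
      rw [h0]
      exact ⟨le_refl _, fun h => absurd h hk⟩
  have hσ'mem : σ' ∈ (Finset.univ.filter fun σ : κ → κ =>
      Function.Bijective σ ∧ ∀ k, u k k ≤ u k (σ k)) := by
    refine Finset.mem_filter.mpr ⟨Finset.mem_univ _, hbij.comp e.symm.bijective, fun k => ?_⟩
    exact (himp k).trans (himp' k).1
  have hlt : ∑ k, u k (σ k) < ∑ k, u k (σ' k) :=
    Finset.sum_lt_sum (fun k _ => (himp' k).1) ⟨y, Finset.mem_univ y, (himp' y).2 hyL⟩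
  have := hmax σ' hσ'mem
  linarith


def AllocInv {ι : Type*} [DecidableEq ι] (n : ℕ) (M : Finset ι) (w : Fin n → ι → ℝ)
    (A : Fin n → Finset ι) (R : Finset ι) : Prop :=
  (∀ i, A i ⊆ M) ∧
  (∀ i j, i ≠ j → Disjoint (A i) (A j)) ∧
  (∀ i, Disjoint (A i) R) ∧
  (∀ g ∈ M, g ∉ R → ∃ i, g ∈ A i) ∧
  (∀ i j, ∀ g ∈ A j, (1/2 : ℝ) * ∑ x ∈ (A j).erase g, w i x ≤ ∑ x ∈ A i, w i x) ∧
  (∀ i j, (A j).Nonempty → ∃ g ∈ A j, ∑ x ∈ (A j).erase g, w i x ≤ ∑ x ∈ A i, w i x) ∧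
  (∀ k, (A k).Nonempty → ∀ g ∈ R, w k g ≤ ∑ x ∈ A k, w k x)

lemma alloc_rec {ι : Type*} [DecidableEq ι] (n : ℕ) (hn : 1 ≤ n) (M : Finset ι)
    (w : Fin n → ι → ℝ) (hw : ∀ i, ∀ g ∈ M, 0 ≤ w i g) :
    ∀ N (R : Finset ι), R.card ≤ N → R ⊆ M →
      ∀ A : Fin n → Finset ι, AllocInv n M w A R →
      ∃ A', AllocInv n M w A' ∅ := by
  classical
  intro N
  induction N with
  | zero =>
    intro R hcard hRM A hA
    have hR : R = ∅ := Finset.card_eq_zero.mp (Nat.le_zero.mp hcard)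
    exact ⟨A, hR ▸ hA⟩
  | succ N ih =>
    intro R hcard hRM A hA
    rcases Finset.eq_empty_or_nonempty R with rfl | hRne
    · exact ⟨A, hA⟩
    obtain ⟨hsub, hdisj, hdisR, hcov, hEFX, hEF1, hfav⟩ := hA
    have hnn : ∀ (i : Fin n) (s : Finset ι), s ⊆ M → 0 ≤ ∑ x ∈ s, w i x :=
      fun i s hs => Finset.sum_nonneg fun x hx => hw i x (hs hx)
    have hmono : ∀ (i : Fin n) (s t : Finset ι), s ⊆ t → t ⊆ M →
        ∑ x ∈ s, w i x ≤ ∑ x ∈ t, w i x :=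
      fun i s t hst ht => Finset.sum_le_sum_of_subset_of_nonneg hst
        (fun x hx _ => hw i x (ht hx))
    by_cases hemp : ∃ k, A k = ∅
    · -- phase 1 : some agent has an empty bundle; give it its favourite item in R
      obtain ⟨k, hk⟩ := hemp
      obtain ⟨g, hgR, hgmax⟩ := Finset.exists_max_image R (w k) hRne
      have hgM : g ∈ M := hRM hgR
      have hgnot : ∀ j, g ∉ A j := fun j h => (Finset.disjoint_left.mp (hdisR j)) h hgR
      set A' : Fin n → Finset ι := fun j => if j = k then {g} else A j with hA'
      have hsub' : ∀ i, A' i ⊆ M := by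
        intro i; rw [hA']; dsimp only; split
        · simpa using hgM
        · exact hsub i
      have hA'RHS : ∀ i, ∑ x ∈ A i, w i x ≤ ∑ x ∈ A' i, w i x := by
        intro i
        rw [hA']; dsimp only; split
        · next h => rw [h, hk]; simpa using hw k g hgM
        · exact le_refl _
      have hcard' : (R.erase g).card ≤ N := by
        rw [Finset.card_erase_of_mem hgR]; omega
      refine ih (R.erase g) hcard' ((Finset.erase_subset g R).trans hRM) A'
        ⟨hsub', ?_, ?_, ?_, ?_, ?_, ?_⟩
      · intro i j hij
        rw [hA']; dsimp only
        split <;> split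
        · next h1 h2 => exact absurd (h1.trans h2.symm) hij
        · next h1 h2 => simpa using hgnot j
        · next h1 h2 => simpa [Finset.disjoint_singleton_right] using hgnot i
        · next h1 h2 => exact hdisj i j hij
      · intro i
        rw [hA']; dsimp only; split
        · simp
        · exact (hdisR i).mono_right (Finset.erase_subset g R)
      · intro g' hg'M hg'
        by_cases hgg : g' = g
        · exact ⟨k, by simp [hA', hgg]⟩
        · have : g' ∉ R := fun h => hg' (Finset.mem_erase.mpr ⟨hgg, h⟩)
          obtain ⟨i, hi⟩ := hcov g' hg'M this
          have hik : i ≠ k := fun h => by rw [h, hk] at hi; exact absurd hi (Finset.notMem_empty g')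
          exact ⟨i, by simp [hA', hik, hi]⟩
      · intro i j g' hg'
        by_cases hjk : j = k
        · subst hjk
          have : g' = g := by simpa [hA'] using hg'
          subst this
          have : (A' j).erase g' = ∅ := by simp [hA']
          rw [this]
          simpa using hnn i (A' i) (hsub' i)
        · have hg'' : g' ∈ A j := by simpa [hA', hjk] using hg'
          have := hEFX i j g' hg''
          have h2 : (A' j).erase g' = (A j).erase g' := by simp [hA', hjk]
          rw [h2]
          exact this.trans (hA'RHS i)
      · intro i j hj
        by_cases hjk : j = k
        · subst hjk
          refine ⟨g, by simp [hA'], ?_⟩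
          have : (A' j).erase g = ∅ := by simp [hA']
          rw [this]
          simpa using hnn i (A' i) (hsub' i)
        · have hjne : (A j).Nonempty := by simpa [hA', hjk] using hj
          obtain ⟨g', hg', hle⟩ := hEF1 i j hjne
          refine ⟨g', by simpa [hA', hjk] using hg', ?_⟩
          have h2 : (A' j).erase g' = (A j).erase g' := by simp [hA', hjk]
          rw [h2]
          exact hle.trans (hA'RHS i)
      · intro k' hk' g' hg'
        have hg'R : g' ∈ R := Finset.mem_of_mem_erase hg'
        by_cases hkk : k' = k
        · subst hkk
          have : A' k' = {g} := by simp [hA']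
          rw [this]
          simpa using hgmax g' hg'R
        · have hne : (A k').Nonempty := by simpa [hA', hkk] using hk'
          have h2 : A' k' = A k' := by simp [hA', hkk]
          rw [h2]
          exact hfav k' hne g' hg'R
    · -- phase 2 : all bundles nonempty; permute to get a source, give it any item
      push_neg at hemp
      have hane : ∀ k, (A k).Nonempty := fun k => hemp k
      have hFn : Nonempty (Fin n) := ⟨⟨0, hn⟩⟩
      obtain ⟨σ, hbij, himp, hsrc'⟩ := exists_good_perm (fun k j => ∑ x ∈ A j, w k x)
      obtain ⟨i0, hsrc⟩ := hsrc'
      obtain ⟨g, hgR⟩ := hRne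
      have hgM : g ∈ M := hRM hgR
      set B : Fin n → Finset ι := fun j => A (σ j) with hB
      have hgnotB : ∀ j, g ∉ B j := fun j h => (Finset.disjoint_left.mp (hdisR (σ j))) h hgR
      have hsubB : ∀ i, B i ⊆ M := fun i => hsub _
      have hBne : ∀ k, (B k).Nonempty := fun k => hane _
      have hEFXB : ∀ i j, ∀ g' ∈ B j,
          (1/2 : ℝ) * ∑ x ∈ (B j).erase g', w i x ≤ ∑ x ∈ B i, w i x :=
        fun i j g' hg' => (hEFX i (σ j) g' hg').trans (himp i)
      have hEF1B : ∀ i j, (B j).Nonempty →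
          ∃ g' ∈ B j, ∑ x ∈ (B j).erase g', w i x ≤ ∑ x ∈ B i, w i x := by
        intro i j hj
        obtain ⟨g', hg', hle⟩ := hEF1 i (σ j) hj
        exact ⟨g', hg', hle.trans (himp i)⟩
      have hfavB : ∀ k, ∀ g' ∈ R, w k g' ≤ ∑ x ∈ B k, w k x :=
        fun k g' hg' => (hfav k (hane k) g' hg').trans (himp k)
      have hsrcB : ∀ k, ∑ x ∈ B i0, w k x ≤ ∑ x ∈ B k, w k x := fun k => hsrc k
      set A' : Fin n → Finset ι := fun j => if j = i0 then insert g (B i0) else B j with hA'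
      have hA'j : ∀ j, j = i0 → A' j = insert g (B i0) := by
        intro j hj; rw [hA']; dsimp only; rw [if_pos hj]
      have hA'j' : ∀ j, j ≠ i0 → A' j = B j := by
        intro j hj; rw [hA']; dsimp only; rw [if_neg hj]
      have hsub' : ∀ i, A' i ⊆ M := by
        intro i
        by_cases h : i = i0
        · rw [hA'j i h]; exact Finset.insert_subset hgM (hsubB i0)
        · rw [hA'j' i h]; exact hsubB i
      have hA'RHS : ∀ i, ∑ x ∈ B i, w i x ≤ ∑ x ∈ A' i, w i x := by
        intro i
        by_cases h : i = i0
        · rw [hA'j i h, Finset.sum_insert (hgnotB i0), ← h]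
          have := hw i g hgM
          linarith
        · rw [hA'j' i h]
      have hcard' : (R.erase g).card ≤ N := by
        rw [Finset.card_erase_of_mem hgR]; omega
      refine ih (R.erase g) hcard' ((Finset.erase_subset g R).trans hRM) A'
        ⟨hsub', ?_, ?_, ?_, ?_, ?_, ?_⟩
      · intro i j hij
        have hB2 : ∀ a b : Fin n, a ≠ b → Disjoint (B a) (B b) :=
          fun a b hab => hdisj (σ a) (σ b) (fun h => hab (hbij.injective h))
        by_cases h1 : i = i0 <;> by_cases h2 : j = i0
        · exact absurd (h1.trans h2.symm) hij
        · rw [hA'j i h1, hA'j' j h2]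
          refine Finset.disjoint_insert_left.mpr ⟨hgnotB j, ?_⟩
          exact hB2 i0 j (fun h => h2 h.symm)
        · rw [hA'j' i h1, hA'j j h2]
          exact Finset.disjoint_insert_right.mpr ⟨hgnotB i, hB2 i i0 h1⟩
        · rw [hA'j' i h1, hA'j' j h2]
          exact hB2 i j hij
      · intro i
        by_cases h : i = i0
        · rw [hA'j i h]
          exact Finset.disjoint_insert_left.mpr
            ⟨Finset.notMem_erase g R, (hdisR (σ i0)).mono_right (Finset.erase_subset g R)⟩
        · rw [hA'j' i h]
          exact (hdisR (σ i)).mono_right (Finset.erase_subset g R)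
      · intro g' hg'M hg'
        by_cases hgg : g' = g
        · refine ⟨i0, ?_⟩
          rw [hA'j i0 rfl, hgg]
          exact Finset.mem_insert_self g _
        · have : g' ∉ R := fun h => hg' (Finset.mem_erase.mpr ⟨hgg, h⟩)
          obtain ⟨i, hi⟩ := hcov g' hg'M this
          obtain ⟨j, hj⟩ := hbij.surjective i
          have hiB : g' ∈ B j := by rw [hB]; dsimp only; rw [hj]; exact hi
          by_cases hji : j = i0
          · refine ⟨i0, ?_⟩
            rw [hA'j i0 rfl]
            exact Finset.mem_insert_of_mem (hji ▸ hiB)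
          · exact ⟨j, by rw [hA'j' j hji]; exact hiB⟩
      · intro i j g' hg'
        by_cases hji : j = i0
        · rw [hA'j j hji] at hg' ⊢
          rcases Finset.mem_insert.mp hg' with rfl | hg'B
          · rw [Finset.erase_insert (hgnotB i0)]
            have h3 := hsrcB i
            have h4 := hnn i (B i0) (hsubB i0)
            have h5 := hA'RHS i
            linarith
          · have hne : g' ≠ g := fun h => hgnotB i0 (h ▸ hg'B)
            rw [Finset.erase_insert_of_ne (Ne.symm hne),
              Finset.sum_insert (fun h => hgnotB i0 (Finset.mem_of_mem_erase h))]
            have h3 : ∑ x ∈ (B i0).erase g', w i x ≤ ∑ x ∈ B i0, w i x :=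
              hmono i _ _ (Finset.erase_subset _ _) (hsubB i0)
            have h4 := hsrcB i
            have h5 := hfavB i g hgR
            have h6 := hA'RHS i
            linarith
        · rw [hA'j' j hji]  at hg' ⊢
          exact (hEFXB i j g' hg').trans (hA'RHS i)
      · intro i j hj
        by_cases hji : j = i0
        · rw [hA'j j hji]
          refine ⟨g, Finset.mem_insert_self g _, ?_⟩
          rw [Finset.erase_insert (hgnotB i0)]
          exact (hsrcB i).trans (hA'RHS i)
        · rw [hA'j' j hji] at hj ⊢
          obtain ⟨g', hg', hle⟩ := hEF1B i j hj
          exact ⟨g', hg', hle.trans (hA'RHS i)⟩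
      · intro k hk g' hg'
        have hg'R : g' ∈ R := Finset.mem_of_mem_erase hg'
        exact (hfavB k g' hg'R).trans (hA'RHS k)

/-- For any number `n ≥ 1` of agents with additive valuations over a finite set `M` of
indivisible items, there exists a complete allocation of `M` that is simultaneously
1/2-EFX and EF1. -/
theorem half_efx_and_ef1_exists {ι : Type*} [DecidableEq ι] (n : ℕ) (hn : 1 ≤ n)
    (M : Finset ι) (w : Fin n → ι → ℝ)
    (hw : ∀ i, ∀ g ∈ M, 0 ≤ w i g) :
    ∃ A : Fin n → Finset ι,
      (∀ i, A i ⊆ M) ∧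
      (∀ g ∈ M, ∃ i, g ∈ A i) ∧
      (∀ i j, i ≠ j → Disjoint (A i) (A j)) ∧
      (∀ i j, ∀ g ∈ A j,
        (1/2 : ℝ) * ∑ x ∈ (A j).erase g, w i x ≤ ∑ x ∈ A i, w i x) ∧
      (∀ i j, ((A j).Nonempty →
          ∃ g ∈ A j, ∑ x ∈ (A j).erase g, w i x ≤ ∑ x ∈ A i, w i x) ∧
        (A j = ∅ → ∑ x ∈ A j, w i x ≤ ∑ x ∈ A i, w i x)) := by
  classical
  have hbase : AllocInv n M w (fun _ => ∅) M := by
    refine ⟨fun i => Finset.empty_subset M, fun i j _ => by simp,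
      fun i => by simp, fun g hg hns => absurd hg hns, ?_, ?_, ?_⟩
    · intro i j g hg; exact absurd hg (Finset.notMem_empty g)
    · intro i j hj; exact absurd hj Finset.not_nonempty_empty
    · intro k hk; exact absurd hk Finset.not_nonempty_empty
  obtain ⟨A, hsub, hdisj, hdisR, hcov, hEFX, hEF1, hfav⟩ :=
    alloc_rec n hn M w hw M.card M le_rfl (subset_refl M) _ hbase
  refine ⟨A, hsub, fun g hg => hcov g hg (Finset.notMem_empty g), hdisj, hEFX,
    fun i j => ⟨hEF1 i j, ?_⟩⟩
  intro hj
  rw [hj]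
  simpa using Finset.sum_nonneg fun x hx => hw i x (hsub i hx)
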